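/- Let G be a finite abelian group splitting over a field k, acting k-linearly on a k-linear additive category C. For each equivariant object (X, α) in C^G, the morphism f : ⊕_{χ∈Ĝ} F_χ(X,α) → Ind(X) whose restriction to F_χ(X,α) is (χ(h^{-1})α_h)_{h∈G} is an isomorphism in C^G, with inverse whose χ-th component is (1/|G|)∑_{h∈G} χ(h)α_h^{-1}. -/

import Mathlib

open CategoryTheory

universe v u v₂ u₂

/-- A (weak) action of a group `G` on a category `C`: autoequivalences `F g` together with
natural isomorphisms `ε g h : F h ⋙ F g ≅ F (g * h)` satisfying the 2-cocycle condition. -/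
structure GrpAction (G : Type*) [Group G] (C : Type u) [Category.{v} C] where
  F : G → C ⥤ C
  isEquiv : ∀ g : G, (F g).IsEquivalence
  ε : ∀ g h : G, F h ⋙ F g ≅ F (g * h)
  cocycle : ∀ (g h k : G) (X : C),
    (ε g h).hom.app ((F k).obj X) ≫ (ε (g * h) k).hom.app X ≫
        eqToHom (by rw [mul_assoc]) =
      (F g).map ((ε h k).hom.app X) ≫ (ε g (h * k)).hom.app X

variable {G : Type*} [Group G] {C : Type u} [Category.{v} C]

/-- A `G`-equivariant object: an object together with isomorphisms `α g : X ≅ F g X`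
satisfying the compatibility condition. -/
structure EqvObj (A : GrpAction G C) where
  pt : C
  α : ∀ g : G, pt ≅ (A.F g).obj pt
  compat : ∀ g h : G, (α (g * h)).hom =
    (α g).hom ≫ (A.F g).map ((α h).hom) ≫ (A.ε g h).hom.app pt

instance (A : GrpAction G C) : Category (EqvObj A) where
  Hom M N := { f : M.pt ⟶ N.pt // ∀ g : G,
    f ≫ (N.α g).hom = (M.α g).hom ≫ (A.F g).map f }
  id M := ⟨𝟙 M.pt, by intro g; simp⟩
  comp {M N P} f g := ⟨f.1 ≫ g.1, by
    intro h
    rw [Category.assoc, g.2, ← Category.assoc, f.2, Category.assoc, ← Functor.map_comp]⟩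
  id_comp f := Subtype.ext (Category.id_comp f.1)
  comp_id f := Subtype.ext (Category.comp_id f.1)
  assoc f g h := Subtype.ext (Category.assoc f.1 g.1 h.1)

open CategoryTheory.Limits

open scoped Classical
set_option maxHeartbeats 1600000

section CharacterLemmas

variable {K : Type*} [Field K] {Γ : Type*} [CommGroup Γ] [Fintype Γ]

lemma aux_chars_li :
    LinearIndependent K fun χ : Γ →* Kˣ => (fun g => ((χ g : Kˣ) : K) : Γ → K) :=
  (linearIndependent_monoidHom Γ K).comp
    (fun χ : Γ →* Kˣ => (Units.coeHom K).comp χ)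
    (fun χ χ' hh => by ext g; exact DFunLike.congr_fun hh g)

/-- the character attached to evaluation at `g₀` through `φ`. -/
noncomputable def auxEvalChar (φ : MonoidAlgebra K Γ ≃ₐ[K] (Γ → K)) (g₀ : Γ) : Γ →* Kˣ :=
  ((MonoidAlgebra.lift K K Γ).symm
    ((Pi.evalAlgHom K (fun _ => K) g₀).comp φ.toAlgHom)).toHomUnits

lemma auxEvalChar_apply (φ : MonoidAlgebra K Γ ≃ₐ[K] (Γ → K)) (g₀ t : Γ) :
    ((auxEvalChar φ g₀ t : Kˣ) : K) = φ (MonoidAlgebra.single t 1) g₀ := rfl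

lemma auxEvalChar_injective (φ : MonoidAlgebra K Γ ≃ₐ[K] (Γ → K)) :
    Function.Injective (auxEvalChar φ) := by
  intro g₀ g₁ h
  by_contra hne
  have hmh : ∀ t : Γ, φ (MonoidAlgebra.single t 1) g₀ = φ (MonoidAlgebra.single t 1) g₁ := by
    intro t
    rw [← auxEvalChar_apply φ g₀ t, ← auxEvalChar_apply φ g₁ t, h]
  have hF : (Pi.evalAlgHom K (fun _ => K) g₀).comp φ.toAlgHom
      = (Pi.evalAlgHom K (fun _ => K) g₁).comp φ.toAlgHom := by
    apply (MonoidAlgebra.lift K K Γ).symm.injective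
    ext t
    simpa using hmh t
  have := DFunLike.congr_fun hF (φ.symm (Pi.single g₀ 1))
  simp only [AlgHom.coe_comp, Function.comp_apply, AlgEquiv.toAlgHom_eq_coe,
    AlgHom.coe_coe, AlgEquiv.coe_toAlgHom, AlgEquiv.apply_symm_apply, Pi.evalAlgHom_apply] at this
  rw [Pi.single_eq_same, Pi.single_eq_of_ne (Ne.symm hne)] at this
  exact one_ne_zero this

lemma aux_card (φ : MonoidAlgebra K Γ ≃ₐ[K] (Γ → K)) [Fintype (Γ →* Kˣ)] :
    Fintype.card (Γ →* Kˣ) = Fintype.card Γ := by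
  refine le_antisymm ?_ (Fintype.card_le_of_injective _ (auxEvalChar_injective φ))
  have := aux_chars_li (K := K) (Γ := Γ)
  simpa [Module.finrank_pi] using this.fintype_card_le_finrank

lemma aux_exists_char (φ : MonoidAlgebra K Γ ≃ₐ[K] (Γ → K)) {t : Γ} (ht : t ≠ 1) :
    ∃ χ : Γ →* Kˣ, χ t ≠ 1 := by
  have hx : φ (MonoidAlgebra.single t (1 : K)) ≠ 1 := by
    intro hcontra
    have h1 : MonoidAlgebra.single t (1 : K) = 1 := φ.injective (by rw [hcontra, map_one])
    rw [MonoidAlgebra.one_def] at h1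
    rcases MonoidAlgebra.single_inj.mp h1 with ⟨h, -⟩ | ⟨h, -⟩
    · exact ht h
    · exact one_ne_zero h
  obtain ⟨g₀, hg₀⟩ : ∃ g₀, φ (MonoidAlgebra.single t 1) g₀ ≠ 1 := by
    by_contra hcon
    push_neg at hcon
    exact hx (funext fun g => hcon g)
  exact ⟨auxEvalChar φ g₀, fun h => hg₀ (by
    rw [← auxEvalChar_apply φ g₀ t, h, Units.val_one])⟩

lemma aux_card_ne_zero (φ : MonoidAlgebra K Γ ≃ₐ[K] (Γ → K)) :
    (Fintype.card Γ : K) ≠ 0 := by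
  intro hc
  set x : MonoidAlgebra K Γ := ∑ g : Γ, MonoidAlgebra.single g 1 with hxdef
  have hxx : x * x = (Fintype.card Γ : K) • x := by
    rw [hxdef, Finset.sum_mul]
    have hone : ∀ g : Γ, (MonoidAlgebra.single g (1 : K)) * ∑ h : Γ, MonoidAlgebra.single h 1
        = ∑ h : Γ, MonoidAlgebra.single h (1 : K) := by
      intro g
      rw [Finset.mul_sum]
      refine Fintype.sum_bijective (fun h => g * h) (Group.mulLeft_bijective g) _ _ fun h => ?_
      rw [MonoidAlgebra.single_mul_single, one_mul]
    rw [Finset.sum_congr rfl fun g _ => hone g, Finset.sum_const, Finset.card_univ,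
      Nat.cast_smul_eq_nsmul]
  have hx0 : x ≠ 0 := by
    intro h0
    have h1 : x.coeff 1 = 1 := by
      rw [hxdef, MonoidAlgebra.coeff_sum, Finsupp.finset_sum_apply]
      simp [Finsupp.single_apply]
    rw [h0] at h1
    simp at h1
  have h2 : φ x * φ x = 0 := by rw [← map_mul, hxx, hc, zero_smul, map_zero]
  have h3 : φ x = 0 := by
    funext g
    have := congrFun h2 g
    simp only [Pi.mul_apply, Pi.zero_apply] at this
    exact mul_self_eq_zero.mp this
  exact hx0 (by simpa using φ.injective (by rw [h3, map_zero]))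

lemma aux_sum_char (ψ : Γ →* Kˣ) :
    ∑ h : Γ, ((ψ h : Kˣ) : K) = if ψ = 1 then (Fintype.card Γ : K) else 0 := by
  split_ifs with h1
  · subst h1; simp
  · obtain ⟨h₀, hh₀⟩ : ∃ h₀, ψ h₀ ≠ 1 := by
      by_contra hcon
      push_neg at hcon
      exact h1 (MonoidHom.ext fun g => hcon g)
    have key : ((ψ h₀ : Kˣ) : K) * ∑ h : Γ, ((ψ h : Kˣ) : K) = ∑ h : Γ, ((ψ h : Kˣ) : K) := by
      rw [Finset.mul_sum]
      refine Fintype.sum_bijective (fun h => h₀ * h) (Group.mulLeft_bijective h₀) _ _ fun h => ?_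
      rw [← Units.val_mul, ← map_mul]
    have hne : ((ψ h₀ : Kˣ) : K) - 1 ≠ 0 :=
      sub_ne_zero.mpr fun h => hh₀ (Units.ext (by rw [h, Units.val_one]))
    have hz : (((ψ h₀ : Kˣ) : K) - 1) * ∑ h : Γ, ((ψ h : Kˣ) : K) = 0 := by
      rw [sub_mul, one_mul, key, sub_self]
    exact (mul_eq_zero.mp hz).resolve_left hne

lemma aux_sum_chars [Fintype (Γ →* Kˣ)]
    (hcard : Fintype.card (Γ →* Kˣ) = Fintype.card Γ)
    (hsep : ∀ t : Γ, t ≠ 1 → ∃ χ : Γ →* Kˣ, χ t ≠ 1) (g : Γ) :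
    ∑ χ : Γ →* Kˣ, ((χ g : Kˣ) : K) = if g = 1 then (Fintype.card Γ : K) else 0 := by
  split_ifs with h1
  · subst h1; simp [hcard]
  · obtain ⟨χ₀, hχ₀⟩ := hsep g h1
    have key : ((χ₀ g : Kˣ) : K) * ∑ χ : Γ →* Kˣ, ((χ g : Kˣ) : K)
        = ∑ χ : Γ →* Kˣ, ((χ g : Kˣ) : K) := by
      rw [Finset.mul_sum]
      refine Fintype.sum_bijective (fun χ => χ₀ * χ) (Group.mulLeft_bijective χ₀) _ _ fun χ => ?_
      rw [← Units.val_mul]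
      rfl
    have hne : ((χ₀ g : Kˣ) : K) - 1 ≠ 0 :=
      sub_ne_zero.mpr fun h => hχ₀ (Units.ext (by rw [h, Units.val_one]))
    have hz : (((χ₀ g : Kˣ) : K) - 1) * ∑ χ : Γ →* Kˣ, ((χ g : Kˣ) : K) = 0 := by
      rw [sub_mul, one_mul, key, sub_self]
    exact (mul_eq_zero.mp hz).resolve_left hne

lemma aux_keyA (hc : (Fintype.card Γ : K) ≠ 0) (χ χ' : Γ →* Kˣ) :
    ∑ h : Γ, (Fintype.card Γ : K)⁻¹ * ((χ' h : Kˣ) : K) * ((χ h⁻¹ : Kˣ) : K)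
      = if χ = χ' then 1 else 0 := by
  have step : ∀ h : Γ, (Fintype.card Γ : K)⁻¹ * ((χ' h : Kˣ) : K) * ((χ h⁻¹ : Kˣ) : K)
      = (Fintype.card Γ : K)⁻¹ * (((χ⁻¹ * χ') h : Kˣ) : K) := by
    intro h
    rw [MonoidHom.mul_apply, MonoidHom.inv_apply, Units.val_mul, map_inv]
    ring
  rw [Finset.sum_congr rfl fun h _ => step h, ← Finset.mul_sum, aux_sum_char]
  by_cases hχ : χ = χ'
  · rw [if_pos hχ, if_pos (by rw [hχ]; exact inv_mul_cancel χ'), inv_mul_cancel₀ hc]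
  · rw [if_neg hχ, if_neg fun hcon => hχ (inv_mul_eq_one.mp hcon), mul_zero]

lemma aux_keyB [Fintype (Γ →* Kˣ)] (hc : (Fintype.card Γ : K) ≠ 0)
    (hcard : Fintype.card (Γ →* Kˣ) = Fintype.card Γ)
    (hsep : ∀ t : Γ, t ≠ 1 → ∃ χ : Γ →* Kˣ, χ t ≠ 1) (g g' : Γ) :
    ∑ χ : Γ →* Kˣ, ((Fintype.card Γ : K)⁻¹ * ((χ g : Kˣ) : K)) * ((χ g'⁻¹ : Kˣ) : K)
      = if g = g' then 1 else 0 := by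
  have step : ∀ χ : Γ →* Kˣ, ((Fintype.card Γ : K)⁻¹ * ((χ g : Kˣ) : K)) * ((χ g'⁻¹ : Kˣ) : K)
      = (Fintype.card Γ : K)⁻¹ * ((χ (g * g'⁻¹) : Kˣ) : K) := by
    intro χ
    rw [map_mul, Units.val_mul]
    ring
  rw [Finset.sum_congr rfl fun χ _ => step χ, ← Finset.mul_sum,
    aux_sum_chars hcard hsep]
  by_cases hg : g = g'
  · rw [if_pos hg, if_pos (by rw [hg]; exact mul_inv_cancel g'), inv_mul_cancel₀ hc]
  · rw [if_neg hg, if_neg fun hcon => hg (mul_inv_eq_one.mp hcon), mul_zero]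

end CharacterLemmas

section BiproductLemmas

open CategoryTheory.Limits

variable {J : Type*} [Fintype J] {D : Type u₂} [Category.{v₂} D] [Preadditive D]
variable {f : J → D} [HasBiproduct f]

theorem aux_lift_eq {T : D} {g : ∀ j, T ⟶ f j} :
    biproduct.lift g = ∑ j, g j ≫ biproduct.ι f j := by
  classical
  ext j
  simp [Preadditive.sum_comp, biproduct.ι_π, CategoryTheory.comp_dite]

theorem aux_desc_eq {T : D} {g : ∀ j, f j ⟶ T} :
    biproduct.desc g = ∑ j, biproduct.π f j ≫ g j := by
  classical
  ext j
  simp [Preadditive.comp_sum, biproduct.ι_π_assoc, dite_comp]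

theorem aux_lift_desc {T U : D} {g : ∀ j, T ⟶ f j} {h : ∀ j, f j ⟶ U} :
    biproduct.lift g ≫ biproduct.desc h = ∑ j : J, g j ≫ h j := by
  classical
  simp [aux_lift_eq, aux_desc_eq, Preadditive.comp_sum, Preadditive.sum_comp,
    biproduct.ι_π_assoc, comp_dite, dite_comp]

end BiproductLemmas

/-- Let `G` be a finite abelian group which splits over the field `k`
(i.e. `kG` is a product of copies of `k`), acting `k`-linearly on a `k`-linear additive
category `C`.  For each equivariant object `(X, α) ∈ C^G`, the morphism
`f : ⊕_{χ∈Ĝ} F_χ(X,α) → Ind(X)` whose restriction to the `χ`-component is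
`(χ(h⁻¹)α_h)_{h∈G}` is an isomorphism in `C^G` — it is compatible with the equivariant
structures of both sides, and it has the two-sided inverse whose `χ`-th component is
`(1/|G|) ∑_{h∈G} χ(h) α_h⁻¹`. -/
theorem dual_monad_iso {G : Type*} [CommGroup G] [Fintype G]
    (k : Type*) [Field k] [Preadditive C] [CategoryTheory.Linear k C]
    (hsplit : Nonempty (MonoidAlgebra k G ≃ₐ[k] (G → k)))
    (A : GrpAction G C)
    (hadd : ∀ g : G, (A.F g).Additive) (hlin : ∀ g : G, (A.F g).Linear k)
    (M : EqvObj A)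
    [HasBiproduct fun h : G => (A.F h).obj M.pt]
    [HasBiproduct fun _ : G →* kˣ => M.pt]
    -- the equivariant structure of `Ind(X)`:
    (αI : ∀ g : G, (⨁ fun h : G => (A.F h).obj M.pt) ≅
      (A.F g).obj (⨁ fun h : G => (A.F h).obj M.pt))
    (hαI : ∀ g h : G, biproduct.ι (fun h : G => (A.F h).obj M.pt) h ≫ (αI g).hom =
      eqToHom (by rw [mul_inv_cancel_left]) ≫ (A.ε g (g⁻¹ * h)).inv.app M.pt ≫
        (A.F g).map (biproduct.ι (fun h : G => (A.F h).obj M.pt) (g⁻¹ * h)))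
    -- the equivariant structure of `⊕_{χ∈Ĝ} F_χ(X, α)`:
    (αS : ∀ g : G, (⨁ fun _ : G →* kˣ => M.pt) ≅
      (A.F g).obj (⨁ fun _ : G →* kˣ => M.pt))
    (hαS : ∀ (g : G) (χ : G →* kˣ),
      biproduct.ι (fun _ : G →* kˣ => M.pt) χ ≫ (αS g).hom =
        (((χ g⁻¹ : kˣ) : k) • (M.α g).hom) ≫
          (A.F g).map (biproduct.ι (fun _ : G →* kˣ => M.pt) χ)) :
    -- `f` with the components `(χ(h⁻¹) α_h)_{h∈G}` …
    ∃ f : (⨁ fun _ : G →* kˣ => M.pt) ⟶ ⨁ fun h : G => (A.F h).obj M.pt,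
      (∀ χ : G →* kˣ, biproduct.ι (fun _ : G →* kˣ => M.pt) χ ≫ f =
        biproduct.lift fun h : G => ((χ h⁻¹ : kˣ) : k) • (M.α h).hom) ∧
      -- … is equivariant, i.e. a morphism in `C^G` …
      (∀ g : G, f ≫ (αI g).hom = (αS g).hom ≫ (A.F g).map f) ∧
      -- … and is an isomorphism, with the described inverse:
      ∃ finv : (⨁ fun h : G => (A.F h).obj M.pt) ⟶ ⨁ fun _ : G →* kˣ => M.pt,
        (∀ χ : G →* kˣ, finv ≫ biproduct.π (fun _ : G →* kˣ => M.pt) χ =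
          biproduct.desc fun h : G =>
            (((Fintype.card G : k)⁻¹ * ((χ h : kˣ) : k)) • (M.α h).inv)) ∧
        f ≫ finv = 𝟙 _ ∧ finv ≫ f = 𝟙 _ := by
  classical
  obtain ⟨φ⟩ := hsplit
  haveI : Finite (G →* kˣ) := aux_chars_li.finite
  letI : Fintype (G →* kˣ) := Fintype.ofFinite _
  have hcard : Fintype.card (G →* kˣ) = Fintype.card G := aux_card φ
  have hsep : ∀ t : G, t ≠ 1 → ∃ χ : G →* kˣ, χ t ≠ 1 := fun t ht => aux_exists_char φ ht
  have hc : (Fintype.card G : k) ≠ 0 := aux_card_ne_zero φ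
  have hclean : ∀ (g x h : G) (e : x = h)
      (pf : (A.F (g * h)).obj M.pt = (A.F (g * x)).obj M.pt),
      eqToHom pf ≫ (A.ε g x).inv.app M.pt ≫
          (A.F g).map (biproduct.ι (fun h : G => (A.F h).obj M.pt) x)
        = (A.ε g h).inv.app M.pt ≫
          (A.F g).map (biproduct.ι (fun h : G => (A.F h).obj M.pt) h) := by
    intro g x h e pf
    subst e
    rw [eqToHom_refl, Category.id_comp]
  have hαI' : ∀ g h : G, biproduct.ι (fun h : G => (A.F h).obj M.pt) (g * h) ≫ (αI g).hom
      = (A.ε g h).inv.app M.pt ≫ (A.F g).map (biproduct.ι (fun h : G => (A.F h).obj M.pt) h) :=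
    fun g h => (hαI g (g * h)).trans
      (hclean g (g⁻¹ * (g * h)) h (inv_mul_cancel_left g h) _)
  refine ⟨biproduct.desc fun χ => biproduct.lift fun h => ((χ h⁻¹ : kˣ) : k) • (M.α h).hom,
    fun χ => biproduct.ι_desc _ _, ?_,
    biproduct.lift fun χ => biproduct.desc fun h =>
      ((Fintype.card G : k)⁻¹ * ((χ h : kˣ) : k)) • (M.α h).inv,
    fun χ => biproduct.lift_π _ _, ?_, ?_⟩
  · intro g
    haveI := hadd g
    haveI := hlin g
    apply biproduct.hom_ext'
    intro χ
    rw [← Category.assoc, biproduct.ι_desc, ← Category.assoc, hαS g χ, Category.assoc,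
      ← Functor.map_comp, biproduct.ι_desc]
    rw [aux_lift_eq, Preadditive.sum_comp, Functor.map_sum,
      Preadditive.comp_sum]
    refine (Fintype.sum_equiv (Equiv.mulLeft g) _ _ fun h => ?_).symm
    have hcoe : ((χ (g * h)⁻¹ : kˣ) : k) = ((χ g⁻¹ : kˣ) : k) * ((χ h⁻¹ : kˣ) : k) := by
      rw [mul_inv_rev, map_mul, Units.val_mul, mul_comm]
    simp only [Equiv.coe_mulLeft, Category.assoc, Linear.smul_comp, Linear.comp_smul,
      Functor.map_smul, Functor.map_comp, smul_smul, hαI', M.compat g h, hcoe,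
      Iso.hom_inv_id_app_assoc]
    erw [Linear.smul_comp]
    simp only [Category.assoc, Iso.hom_inv_id_app_assoc]
    rw [mul_comm]
  · apply biproduct.hom_ext'
    intro χ
    apply biproduct.hom_ext
    intro χ'
    simp only [Category.assoc, biproduct.lift_π, biproduct.ι_desc_assoc, Category.id_comp]
    rw [aux_lift_desc]
    simp only [Linear.smul_comp, Linear.comp_smul, smul_smul, Iso.hom_inv_id]
    rw [← Finset.sum_smul, aux_keyA hc, biproduct.ι_π]
    split_ifs with hχ
    · subst hχ; simp
    · simp
  · apply biproduct.hom_ext'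
    intro g
    apply biproduct.hom_ext
    intro g'
    rw [aux_lift_desc]
    simp only [Preadditive.sum_comp, Preadditive.comp_sum, Category.assoc,
      biproduct.lift_π, biproduct.ι_desc_assoc, Category.id_comp,
      Linear.smul_comp, Linear.comp_smul, smul_smul]
    rw [← Finset.sum_smul, aux_keyB hc hcard hsep, biproduct.ι_π]
    split_ifs with hg
    · subst hg; simp
    · simp
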